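/- The series W = Σ_{k=1}^∞ (p_k + p_{k+1})/p_k² converges, and its value satisfies 5.9157 < W < 5.9158. -/
import Mathlib

/-- The Pell numbers: `p 0 = 0`, `p 1 = 1`, `p 2 = 2`, `p (n+2) = 2 p (n+1) + p n`. -/
def pell : ℕ → ℤ
  | 0 => 0
  | 1 => 1
  | (n+2) => 2 * pell (n+1) + pell n

lemma pell_ge : ∀ n : ℕ, (2:ℤ)^n ≤ pell (n+1) ∧ 0 ≤ pell n := by
  intro n
  induction n with
  | zero => simp [pell]
  | succ n ih =>
    obtain ⟨h1, h2⟩ := ih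
    constructor
    · show (2:ℤ)^(n+1) ≤ 2 * pell (n+1) + pell n
      have : (2:ℤ)^(n+1) = 2 * 2^n := by ring
      linarith
    · have : (0:ℤ) < 2^n := by positivity
      linarith

lemma pell_pos (n : ℕ) : 0 < pell (n+1) := by
  have h := pell_ge n
  have : (0:ℤ) < 2^n := by positivity
  linarith [h.1]

lemma pell_mono (n : ℕ) : pell n ≤ pell (n+1) := by
  cases n with
  | zero => simp [pell]
  | succ n =>
    show pell (n+1) ≤ 2 * pell (n+1) + pell n
    have h1 := pell_pos n
    have h2 := (pell_ge n).2
    linarith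

lemma term_le (k : ℕ) :
    ((pell (k+1) : ℝ) + (pell (k+2) : ℝ)) / (pell (k+1) : ℝ) ^ 2 ≤ 4 * (1/2:ℝ)^k := by
  have hp : (0:ℝ) < (pell (k+1) : ℝ) := by exact_mod_cast pell_pos k
  have hle : (pell (k+2) : ℝ) ≤ 3 * (pell (k+1) : ℝ) := by
    have h1 : pell (k+1+1) = 2 * pell (k+1) + pell k := rfl
    have h2 := pell_mono k
    have : pell (k+2) ≤ 3 * pell (k+1) := by rw [show k+2 = k+1+1 from rfl, h1]; linarith
    exact_mod_cast this
  have hge : (2:ℝ)^k ≤ (pell (k+1) : ℝ) := by exact_mod_cast (pell_ge k).1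
  have step1 : ((pell (k+1) : ℝ) + (pell (k+2) : ℝ)) / (pell (k+1) : ℝ) ^ 2
      ≤ 4 / (pell (k+1) : ℝ) := by
    rw [div_le_div_iff₀ (by positivity) hp]
    nlinarith
  have step2 : 4 / (pell (k+1) : ℝ) ≤ 4 / (2:ℝ)^k := by
    apply div_le_div_of_nonneg_left (by norm_num) (by positivity) hge
  calc ((pell (k+1) : ℝ) + (pell (k+2) : ℝ)) / (pell (k+1) : ℝ) ^ 2
      ≤ 4 / (2:ℝ)^k := step1.trans step2
    _ = 4 * (1/2:ℝ)^k := by rw [div_pow, one_pow]; ring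

lemma term_nonneg (k : ℕ) :
    0 ≤ ((pell (k+1) : ℝ) + (pell (k+2) : ℝ)) / (pell (k+1) : ℝ) ^ 2 := by
  have h1 : (0:ℝ) < (pell (k+1) : ℝ) := by exact_mod_cast pell_pos k
  have h2 : (0:ℝ) < (pell (k+2) : ℝ) := by exact_mod_cast pell_pos (k+1)
  positivity

theorem stmt_7 :
    Summable (fun k : ℕ => ((pell (k+1) : ℝ) + (pell (k+2) : ℝ)) / (pell (k+1) : ℝ) ^ 2) ∧
    5.9157 < ∑' k : ℕ, ((pell (k+1) : ℝ) + (pell (k+2) : ℝ)) / (pell (k+1) : ℝ) ^ 2 ∧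
    ∑' k : ℕ, ((pell (k+1) : ℝ) + (pell (k+2) : ℝ)) / (pell (k+1) : ℝ) ^ 2 < 5.9158 := by
  set f : ℕ → ℝ := fun k => ((pell (k+1) : ℝ) + (pell (k+2) : ℝ)) / (pell (k+1) : ℝ) ^ 2 with hf
  have hgeo : Summable (fun k : ℕ => 4 * (1/2:ℝ)^k) :=
    (summable_geometric_of_lt_one (by norm_num) (by norm_num)).mul_left 4
  have hsum : Summable f := Summable.of_nonneg_of_le term_nonneg term_le hgeo
  refine ⟨hsum, ?_, ?_⟩
  all_goals {
    have key := Summable.sum_add_tsum_nat_add 21 hsum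
    have hS : ∑ i ∈ Finset.range 21, f i =
        3 + 7/4 + 17/25 + 41/144 + 99/841 + 239/4900 + 577/28561 + 1393/166464
        + 3363/970225 + 8119/5654884 + 19601/32959081 + 47321/192099600
        + 114243/1119638521 + 275807/6525731524 + 665857/38034750625
        + 1607521/221682772224 + 3880899/1292061882721 + 9369319/7530688524100
        + 22619537/43892069261881 + 54608393/255821727047184
        + 131836323/1491038293021225 := by
      simp only [hf, Finset.sum_range_succ, Finset.sum_range_zero]
      norm_num [pell]
    have htail_nonneg : 0 ≤ ∑' i : ℕ, f (i + 21) := tsum_nonneg fun i => term_nonneg _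
    have htail_le : ∑' i : ℕ, f (i + 21) ≤ (1:ℝ)/2^18 := by
      have h1 : ∑' i : ℕ, f (i + 21) ≤ ∑' i : ℕ, 4 * (1/2:ℝ)^(i+21) := by
        apply Summable.tsum_le_tsum (fun i => term_le (i+21)) (hsum.comp_injective (add_left_injective 21))
        exact (hgeo.comp_injective (add_left_injective 21))
      have h2 : ∑' i : ℕ, 4 * (1/2:ℝ)^(i+21) = (1:ℝ)/2^18 := by
        have e : (fun i : ℕ => 4 * (1/2:ℝ)^(i+21)) = fun i : ℕ => (1/2^19 : ℝ) * (1/2)^i := by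
          funext i; rw [pow_add]; ring
        rw [e, tsum_mul_left, tsum_geometric_of_lt_one (by norm_num) (by norm_num)]
        norm_num
      linarith
    first
    | (calc (5.9157:ℝ) < ∑ i ∈ Finset.range 21, f i := by rw [hS]; norm_num
        _ ≤ ∑' k, f k := by rw [← key]; linarith)
    | (calc ∑' k, f k = (∑ i ∈ Finset.range 21, f i) + ∑' i : ℕ, f (i + 21) := key.symm
        _ ≤ (∑ i ∈ Finset.range 21, f i) + 1/2^18 := by linarith
        _ < 5.9158 := by rw [hS]; norm_num)
  }
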